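/- For every integer n, the Abramowitz function J_n, regarded as the function z ↦ ∫_0^∞ t^n · exp(−t² − z/t) dt on ℂ, satisfies the third-order ordinary differential equation z · J_n'''(z) − (n−1) · J_n''(z) + 2 · J_n(z) = 0 at every complex number z with Re(z) > 0, where J_n'' and J_n''' denote the second and third iterated complex derivatives. -/

import Mathlib

open MeasureTheory Set Filter Topology

noncomputable def abramowitzJ (n : ℤ) (z : ℂ) : ℂ :=
  ∫ t in Set.Ioi (0 : ℝ), ((t ^ n : ℝ) : ℂ) * Complex.exp (-(t : ℂ) ^ 2 - z / (t : ℂ))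

namespace Abr

/-- The complex integrand. -/
noncomputable def F (m : ℤ) (z : ℂ) (t : ℝ) : ℂ :=
  ((t ^ m : ℝ) : ℂ) * Complex.exp (-(t : ℂ) ^ 2 - z / (t : ℂ))

/-- The real dominating function. -/
noncomputable def G (m : ℤ) (c : ℝ) (t : ℝ) : ℝ :=
  t ^ m * Real.exp (-t ^ 2 - c / t)

lemma norm_F (m : ℤ) (z : ℂ) {t : ℝ} (ht : 0 < t) : ‖F m z t‖ = G m z.re t := by
  have h1 : ‖((t ^ m : ℝ) : ℂ)‖ = t ^ m := by
    rw [Complex.norm_real, Real.norm_eq_abs, abs_of_pos (zpow_pos ht m)]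
  have h2 : (-(t : ℂ) ^ 2 - z / (t : ℂ)).re = -t ^ 2 - z.re / t := by
    simp [Complex.div_ofReal_re, ← Complex.ofReal_pow]
  rw [F, G, norm_mul, h1, Complex.norm_exp, h2]

lemma exp_neg_div_le (k : ℕ) {c t : ℝ} (hc : 0 < c) (ht : 0 < t) :
    Real.exp (-(c / t)) ≤ k.factorial * t ^ k / c ^ k := by
  have h1 : (c / t) ^ k / k.factorial ≤ Real.exp (c / t) := by
    calc (c / t) ^ k / k.factorial ≤ ∑ i ∈ Finset.range (k + 1), (c / t) ^ i / i.factorial := by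
          exact Finset.single_le_sum (f := fun i => (c / t) ^ i / i.factorial)
            (fun i _ => by positivity) (Finset.self_mem_range_succ k)
      _ ≤ Real.exp (c / t) := Real.sum_le_exp_of_nonneg (by positivity) _
  have h2 : (0:ℝ) < (c / t) ^ k / k.factorial := by positivity
  rw [Real.exp_neg]
  rw [inv_le_comm₀ (Real.exp_pos _) (by positivity)]
  calc ((k.factorial : ℝ) * t ^ k / c ^ k)⁻¹ = (c / t) ^ k / k.factorial := by
        rw [div_pow]; field_simp
    _ ≤ Real.exp (c / t) := h1

lemma G_nonneg (m : ℤ) (c : ℝ) {t : ℝ} (ht : 0 < t) : 0 ≤ G m c t := by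
  unfold G; positivity

/-- Bound near zero : `G m c t ≤ (k!/c^k) * t^(m+k)` for any `k`. -/
lemma G_le (m : ℤ) (k : ℕ) {c t : ℝ} (hc : 0 < c) (ht : 0 < t) :
    G m c t ≤ (k.factorial / c ^ k) * t ^ (m + k) := by
  have h1 : Real.exp (-t ^ 2 - c / t) ≤ k.factorial * t ^ k / c ^ k := by
    calc Real.exp (-t ^ 2 - c / t) ≤ Real.exp (-(c / t)) :=
          Real.exp_le_exp.mpr (by nlinarith [sq_nonneg t])
      _ ≤ _ := exp_neg_div_le k hc ht
  calc G m c t ≤ t ^ m * (k.factorial * t ^ k / c ^ k) :=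
        mul_le_mul_of_nonneg_left h1 (zpow_pos ht m).le
    _ = (k.factorial / c ^ k) * t ^ (m + k) := by
        rw [zpow_add₀ ht.ne', zpow_natCast]; ring

lemma contOn_F (m : ℤ) (z : ℂ) : ContinuousOn (F m z) (Ioi 0) := by
  apply ContinuousOn.mul
  · exact Complex.continuous_ofReal.comp_continuousOn
      (continuousOn_id.zpow₀ m (fun x hx => Or.inl (ne_of_gt hx)))
  · apply Complex.continuous_exp.comp_continuousOn
    apply ContinuousOn.sub
    · exact (continuous_neg.comp ((Complex.continuous_ofReal.pow 2))).continuousOn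
    · exact ContinuousOn.div continuousOn_const Complex.continuous_ofReal.continuousOn
        (fun x hx => by exact_mod_cast ne_of_gt hx)

lemma contOn_G (m : ℤ) (c : ℝ) : ContinuousOn (G m c) (Ioi 0) := by
  apply ContinuousOn.mul
  · exact continuousOn_id.zpow₀ m (fun x hx => Or.inl (ne_of_gt hx))
  · exact Real.continuous_exp.comp_continuousOn
      (((continuous_neg.comp (continuous_pow 2)).continuousOn).sub
        (continuousOn_const.div continuousOn_id (fun x hx => ne_of_gt hx)))

lemma integrableOn_G (m : ℤ) {c : ℝ} (hc : 0 < c) : IntegrableOn (G m c) (Ioi 0) := by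
  have hsplit : Ioc (0:ℝ) 1 ∪ Ioi 1 = Ioi 0 := Ioc_union_Ioi_eq_Ioi zero_le_one
  rw [← hsplit]
  apply IntegrableOn.union
  · -- on (0,1] : bounded by a constant
    set k := m.natAbs with hk
    set B : ℝ := k.factorial / c ^ k with hB
    apply Integrable.mono' (integrableOn_const (C := B) measure_Ioc_lt_top.ne)
    · exact ((contOn_G m c).mono Ioc_subset_Ioi_self).aestronglyMeasurable measurableSet_Ioc
    · filter_upwards [ae_restrict_mem measurableSet_Ioc] with t ht
      rcases ht with ⟨ht0, ht1⟩
      rw [Real.norm_of_nonneg (G_nonneg m c ht0)]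
      calc G m c t ≤ B * t ^ (m + k) := G_le m k hc ht0
        _ ≤ B * 1 := by
            apply mul_le_mul_of_nonneg_left _ (by positivity)
            have hmk : (0:ℤ) ≤ m + k := by
              have := Int.natAbs_eq m; omega
            calc t ^ (m + (k:ℤ)) = t ^ ((m + (k:ℤ)).toNat) := by
                  rw [← zpow_natCast, Int.toNat_of_nonneg hmk]
              _ ≤ 1 := pow_le_one₀ ht0.le ht1
        _ = B := mul_one B
  · -- on (1,∞) : bounded by rpow * gaussian
    set K := m.toNat with hK
    apply Integrable.mono'
      (g := fun t : ℝ => t ^ (K : ℝ) * Real.exp (-1 * t ^ 2))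
      (((integrableOn_rpow_mul_exp_neg_mul_sq one_pos
        (lt_of_lt_of_le neg_one_lt_zero (Nat.cast_nonneg K) : (-1:ℝ) < (K:ℝ))).mono_set (Ioi_subset_Ioi zero_le_one)))
    · exact ((contOn_G m c).mono (Ioi_subset_Ioi zero_le_one)).aestronglyMeasurable
        measurableSet_Ioi
    · filter_upwards [ae_restrict_mem measurableSet_Ioi] with t ht
      have ht0 : (0:ℝ) < t := lt_trans zero_lt_one ht
      rw [Real.norm_of_nonneg (G_nonneg m c ht0)]
      have h1 : t ^ m ≤ t ^ (K : ℤ) :=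
        zpow_le_zpow_right₀ ht.le (Int.self_le_toNat m)
      have h2 : Real.exp (-t ^ 2 - c / t) ≤ Real.exp (-1 * t ^ 2) := by
        apply Real.exp_le_exp.mpr
        have : 0 < c / t := div_pos hc ht0
        nlinarith
      calc G m c t ≤ t ^ (K : ℤ) * Real.exp (-1 * t ^ 2) :=
            mul_le_mul h1 h2 (Real.exp_pos _).le (zpow_pos ht0 _).le
        _ = t ^ (K : ℝ) * Real.exp (-1 * t ^ 2) := by
            rw [zpow_natCast, Real.rpow_natCast]

lemma tendsto_G_zero (m : ℤ) {c : ℝ} (hc : 0 < c) :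
    Tendsto (G m c) (𝓝[>] 0) (𝓝 0) := by
  set k := m.natAbs + 1 with hk
  set B : ℝ := k.factorial / c ^ k with hB
  have hj : (0:ℤ) < m + k := by have := Int.natAbs_eq m; omega
  apply squeeze_zero' (f := G m c)
    (g := fun t => B * t ^ ((m + (k:ℤ)).toNat))
  · filter_upwards [self_mem_nhdsWithin] with t ht using G_nonneg m c ht
  · filter_upwards [self_mem_nhdsWithin] with t ht
    calc G m c t ≤ B * t ^ (m + k) := G_le m k hc ht
      _ = B * t ^ ((m + (k:ℤ)).toNat) := by
          rw [← zpow_natCast, Int.toNat_of_nonneg hj.le]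
  · have : Tendsto (fun t : ℝ => B * t ^ ((m + (k:ℤ)).toNat)) (𝓝 0) (𝓝 (B * 0 ^ ((m + (k:ℤ)).toNat))) := by
      exact (continuous_const.mul (continuous_pow _)).tendsto 0
    rw [zero_pow (by omega), mul_zero] at this
    exact this.mono_left nhdsWithin_le_nhds

lemma tendsto_G_top (m : ℤ) {c : ℝ} (hc : 0 < c) :
    Tendsto (G m c) atTop (𝓝 0) := by
  set K := m.toNat with hK
  apply squeeze_zero' (g := fun t : ℝ => t ^ K * Real.exp (-t))
  · filter_upwards [eventually_gt_atTop 0] with t ht using G_nonneg m c ht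
  · filter_upwards [eventually_ge_atTop 1] with t ht
    have ht0 : (0:ℝ) < t := lt_of_lt_of_le zero_lt_one ht
    have h1 : t ^ m ≤ t ^ (K : ℤ) := zpow_le_zpow_right₀ ht (Int.self_le_toNat m)
    have h2 : Real.exp (-t ^ 2 - c / t) ≤ Real.exp (-t) := by
      apply Real.exp_le_exp.mpr
      have : 0 < c / t := div_pos hc ht0
      nlinarith
    calc G m c t ≤ t ^ (K : ℤ) * Real.exp (-t) :=
          mul_le_mul h1 h2 (Real.exp_pos _).le (zpow_pos ht0 _).le
      _ = t ^ K * Real.exp (-t) := by rw [zpow_natCast]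
  · exact Real.tendsto_pow_mul_exp_neg_atTop_nhds_zero K

lemma integrable_F (m : ℤ) {z : ℂ} (hz : 0 < z.re) : IntegrableOn (F m z) (Ioi 0) := by
  apply Integrable.mono' (integrableOn_G m hz)
  · exact (contOn_F m z).aestronglyMeasurable measurableSet_Ioi
  · filter_upwards [ae_restrict_mem measurableSet_Ioi] with t ht
    rw [norm_F m z ht]

lemma tendsto_F_zero (m : ℤ) {z : ℂ} (hz : 0 < z.re) :
    Tendsto (F m z) (𝓝[>] 0) (𝓝 0) := by
  rw [tendsto_zero_iff_norm_tendsto_zero]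
  apply (tendsto_G_zero m hz).congr'
  filter_upwards [self_mem_nhdsWithin] with t ht
  exact (norm_F m z ht).symm

lemma tendsto_F_top (m : ℤ) {z : ℂ} (hz : 0 < z.re) :
    Tendsto (F m z) atTop (𝓝 0) := by
  rw [tendsto_zero_iff_norm_tendsto_zero]
  apply (tendsto_G_top m hz).congr'
  filter_upwards [eventually_gt_atTop 0] with t ht
  exact (norm_F m z ht).symm

lemma hasDerivAt_F_t (m : ℤ) (z : ℂ) {t : ℝ} (ht : 0 < t) :
    HasDerivAt (F m z)
      ((m : ℂ) * F (m - 1) z t - 2 * F (m + 1) z t + z * F (m - 2) z t) t := by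
  have hu : (t : ℂ) ≠ 0 := by exact_mod_cast ht.ne'
  have h1 : HasDerivAt (fun s : ℝ => ((s : ℝ) : ℂ)) ((1 : ℝ) : ℂ) t :=
    (hasDerivAt_id t).ofReal_comp
  have hsq : HasDerivAt (fun s : ℝ => -(s : ℂ) ^ 2)
      (-(((1:ℝ):ℂ) * (t : ℂ) + (t : ℂ) * ((1:ℝ):ℂ))) t := by
    refine ((h1.mul h1).neg).congr_of_eventuallyEq ?_
    filter_upwards with s
    simp [pow_two]
  have hdiv := (hasDerivAt_const t z).div h1 (by exact_mod_cast ht.ne' : (t:ℂ) ≠ 0)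
  have hE := (hsq.sub hdiv).cexp
  have hp : HasDerivAt (fun s : ℝ => ((s ^ m : ℝ) : ℂ)) (((m : ℝ) * t ^ (m - 1) : ℝ) : ℂ) t :=
    (hasDerivAt_zpow m t (Or.inl ht.ne')).ofReal_comp
  have htotal := hp.mul hE
  refine htotal.congr_deriv ?_
  simp only [F, Complex.ofReal_zpow, Complex.ofReal_mul, Complex.ofReal_intCast,
    Pi.sub_apply, Pi.div_apply, Complex.ofReal_one]
  set u := (t : ℂ) with hudef
  set E := Complex.exp (-u ^ 2 - z / u) with hE2
  have e1 : u ^ (m - 1) = u ^ m * u⁻¹ := by rw [zpow_sub_one₀ hu]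
  have e2 : u ^ (m + 1) = u ^ m * u := by rw [zpow_add_one₀ hu]
  have e3 : u ^ (m - 2) = u ^ m * u⁻¹ * u⁻¹ := by
    rw [show m - 2 = m - 1 - 1 by ring, zpow_sub_one₀ hu, zpow_sub_one₀ hu]
  rw [e1, e2, e3]
  field_simp
  ring

lemma recurrence (n : ℤ) {z : ℂ} (hz : 0 < z.re) :
    ((n : ℂ) - 1) * abramowitzJ (n - 2) z - 2 * abramowitzJ n z
      + z * abramowitzJ (n - 3) z = 0 := by
  set j : ℤ := n - 1 with hj
  have hJ : ∀ m : ℤ, abramowitzJ m z = ∫ t in Ioi (0:ℝ), F m z t := fun m => rfl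
  set f : ℝ → ℂ := fun t => if t ≤ 0 then 0 else F j z t with hf
  set g : ℝ → ℂ := fun t => (j : ℂ) * F (j - 1) z t - 2 * F (j + 1) z t + z * F (j - 2) z t
    with hg
  have hderiv : ∀ t ∈ Ioi (0:ℝ), HasDerivAt f (g t) t := by
    intro t ht
    apply (hasDerivAt_F_t j z ht).congr_of_eventuallyEq
    filter_upwards [Ioi_mem_nhds ht] with s hs
    simp [hf, not_le.mpr (show (0:ℝ) < s from hs)]
  have hcont : ContinuousWithinAt f (Ici 0) 0 := by
    rw [← Ioi_insert, continuousWithinAt_insert_self]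
    have h0 : f 0 = 0 := by simp [hf]
    unfold ContinuousWithinAt
    rw [h0]
    apply (tendsto_F_zero j hz).congr'
    filter_upwards [self_mem_nhdsWithin] with t ht
    simp [hf, not_le.mpr (show (0:ℝ) < t from ht)]
  have hint : IntegrableOn g (Ioi 0) :=
    (((integrable_F (j-1) hz).const_mul _).sub ((integrable_F (j+1) hz).const_mul 2)).add
      ((integrable_F (j-2) hz).const_mul z)
  have htop : Tendsto f atTop (𝓝 0) := by
    apply (tendsto_F_top j hz).congr'
    filter_upwards [eventually_gt_atTop 0] with t ht
    simp [hf, not_le.mpr ht]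
  have key := integral_Ioi_of_hasDerivAt_of_tendsto hcont hderiv hint htop
  have h0 : f 0 = 0 := by simp [hf]
  rw [h0, sub_zero] at key
  have hsplit : (∫ t in Ioi (0:ℝ), g t)
      = (j : ℂ) * abramowitzJ (j - 1) z - 2 * abramowitzJ (j + 1) z
        + z * abramowitzJ (j - 2) z := by
    rw [hJ, hJ, hJ, hg]
    have i1 : Integrable (fun t => (j : ℂ) * F (j - 1) z t) (volume.restrict (Ioi 0)) :=
      (integrable_F (j-1) hz).const_mul _
    have i2 : Integrable (fun t => (2 : ℂ) * F (j + 1) z t) (volume.restrict (Ioi 0)) :=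
      (integrable_F (j+1) hz).const_mul 2
    have i3 : Integrable (fun t => z * F (j - 2) z t) (volume.restrict (Ioi 0)) :=
      (integrable_F (j-2) hz).const_mul z
    have i12 : Integrable (fun t => (j : ℂ) * F (j - 1) z t - (2 : ℂ) * F (j + 1) z t)
        (volume.restrict (Ioi 0)) := i1.sub i2
    rw [integral_add i12 i3, integral_sub i1 i2,
      integral_const_mul, integral_const_mul, integral_const_mul]
  rw [hsplit] at key
  have e1 : j - 1 = n - 2 := by omega
  have e2 : j + 1 = n := by omega
  have e3 : j - 2 = n - 3 := by omega
  rw [e1, e2, e3] at key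
  have : ((j : ℤ) : ℂ) = (n : ℂ) - 1 := by rw [hj]; push_cast; ring
  rw [this] at key
  exact key

lemma hasDerivAt_J (n : ℤ) {z : ℂ} (hz : 0 < z.re) :
    HasDerivAt (abramowitzJ n) (-abramowitzJ (n - 1) z) z := by
  set ε := z.re / 2 with hε
  have hε0 : 0 < ε := by positivity
  have meas : ∀ (m : ℤ) (w : ℂ),
      AEStronglyMeasurable (F m w) (volume.restrict (Ioi (0:ℝ))) :=
    fun m w => (contOn_F m w).aestronglyMeasurable measurableSet_Ioi
  have key := hasDerivAt_integral_of_dominated_loc_of_deriv_le (F := fun w t => F n w t)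
      (F' := fun w t => -F (n-1) w t) (bound := G (n-1) ε) (x₀ := z) (s := Metric.ball z ε) (Metric.ball_mem_nhds z hε0)
      (.of_forall fun w => meas n w) (integrable_F n hz) ((meas (n-1) z).neg)
      ?_ (integrableOn_G (n-1) hε0) ?_
  · have hI : (∫ t in Ioi (0:ℝ), -F (n-1) z t) = -abramowitzJ (n-1) z := by
      rw [integral_neg]; rfl
    rw [hI] at key
    exact key.2
  · -- uniform bound on the ball
    filter_upwards [ae_restrict_mem measurableSet_Ioi] with t ht w hw
    rw [norm_neg, norm_F _ _ ht]
    unfold G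
    apply mul_le_mul_of_nonneg_left _ (zpow_pos ht _).le
    apply Real.exp_le_exp.mpr
    have hwre : ε ≤ w.re := by
      have h1 : |w.re - z.re| ≤ ‖w - z‖ := by
        simpa using Complex.abs_re_le_norm (w - z)
      have h2 : ‖w - z‖ < ε := by
        rw [Metric.mem_ball, Complex.dist_eq] at hw
        exact hw
      have h3 := abs_sub_lt_iff.mp (lt_of_le_of_lt h1 h2)
      rw [hε] at *
      cases h3 with
      | intro hl hr => linarith
    have hdiv : ε / t ≤ w.re / t := (div_le_div_iff_of_pos_right ht).mpr hwre
    linarith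
  · -- differentiability in the parameter
    filter_upwards [ae_restrict_mem measurableSet_Ioi] with t ht w hw
    have hu : (t : ℂ) ≠ 0 := by exact_mod_cast ne_of_gt ht
    have h1 : HasDerivAt (fun v : ℂ => -(t:ℂ)^2 - v / (t:ℂ)) (-(1 / (t:ℂ))) w :=
      ((hasDerivAt_id w).div_const (t:ℂ)).const_sub (-(t:ℂ)^2)
    have h3 := (h1.cexp).const_mul (((t ^ n : ℝ) : ℂ))
    refine h3.congr_deriv ?_
    simp only [F, Complex.ofReal_zpow]
    have e1 : (t:ℂ) ^ (n - 1) = (t:ℂ) ^ n * (t:ℂ)⁻¹ := by rw [zpow_sub_one₀ hu]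
    rw [e1]
    field_simp

lemma deriv_J_eq (n : ℤ) {z : ℂ} (hz : 0 < z.re) :
    deriv (abramowitzJ n) z = -abramowitzJ (n - 1) z :=
  (hasDerivAt_J n hz).deriv

lemma hasDerivAt_deriv_J (n : ℤ) {z : ℂ} (hz : 0 < z.re) :
    HasDerivAt (deriv (abramowitzJ n)) (abramowitzJ (n - 2) z) z := by
  have hopen : IsOpen {w : ℂ | 0 < w.re} := isOpen_lt continuous_const Complex.continuous_re
  have h := (hasDerivAt_J (n-1) hz).neg
  rw [show n - 1 - 1 = n - 2 from by ring, neg_neg] at h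
  apply h.congr_of_eventuallyEq
  filter_upwards [hopen.mem_nhds hz] with w hw
  exact deriv_J_eq n hw

lemma deriv2_J_eq (n : ℤ) {z : ℂ} (hz : 0 < z.re) :
    deriv (deriv (abramowitzJ n)) z = abramowitzJ (n - 2) z :=
  (hasDerivAt_deriv_J n hz).deriv

lemma hasDerivAt_deriv2_J (n : ℤ) {z : ℂ} (hz : 0 < z.re) :
    HasDerivAt (deriv (deriv (abramowitzJ n))) (-abramowitzJ (n - 3) z) z := by
  have hopen : IsOpen {w : ℂ | 0 < w.re} := isOpen_lt continuous_const Complex.continuous_re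
  have h := hasDerivAt_J (n-2) hz
  rw [show n - 2 - 1 = n - 3 from by ring] at h
  apply h.congr_of_eventuallyEq
  filter_upwards [hopen.mem_nhds hz] with w hw
  exact deriv2_J_eq n hw

end Abr

theorem abramowitzJ_ode (n : ℤ) (z : ℂ) (hz : 0 < z.re) :
    z * deriv (deriv (deriv (abramowitzJ n))) z
      - ((n : ℂ) - 1) * deriv (deriv (abramowitzJ n)) z
      + 2 * abramowitzJ n z = 0 := by
  rw [(Abr.hasDerivAt_deriv2_J n hz).deriv, Abr.deriv2_J_eq n hz]
  linear_combination -(Abr.recurrence n hz)
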